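/- Every finite distributive lattice D is sharply transferable with respect to the class of relatively complemented modular lattices: for every relatively complemented modular lattice M and every lattice embedding φ : D → Id M, there exists a lattice homomorphism f : D → M with f(x) ∈ φ(x) for all x, and such that f(x) ∈ φ(y) implies x ≤ y for all x, y ∈ D. -/

import Mathlib

/-- `I` is an ideal of the lattice `M`. -/
def IsLatticeIdeal {M : Type*} [Lattice M] (I : Set M) : Prop :=
  I.Nonempty ∧ (∀ a b : M, a ≤ b → b ∈ I → a ∈ I) ∧ (∀ a b : M, a ∈ I → b ∈ I → a ⊔ b ∈ I)

/-- The join of two ideals of a lattice, as sets. -/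
def idealJoin {M : Type*} [Lattice M] (A B : Set M) : Set M :=
  {x | ∃ a ∈ A, ∃ b ∈ B, x ≤ a ⊔ b}

/-- A lattice is relatively complemented if every element of every closed
interval has a complement in that interval. -/
def RelativelyComplemented (M : Type*) [Lattice M] : Prop :=
  ∀ a x b : M, a ≤ x → x ≤ b → ∃ y : M, x ⊓ y = a ∧ x ⊔ y = b

/-- Every finite distributive lattice `D` is sharply transferable with respect to
the class of relatively complemented modular lattices: for every such `M` and
every lattice embedding `φ : D ↪ Id M`, there is a lattice homomorphism
`f : D → M` with `f x ∈ φ x` for all `x`, such that `f x ∈ φ y` implies `x ≤ y`. -/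
theorem finite_distributive_sharply_transferable_relcomp_modular
    {D : Type*} [DistribLattice D] [Fintype D]
    {M : Type*} [Lattice M] [IsModularLattice M]
    (hRC : RelativelyComplemented M)
    (φ : D → Set M)
    (hId : ∀ x : D, IsLatticeIdeal (φ x))
    (hinf : ∀ x y : D, φ (x ⊓ y) = φ x ∩ φ y)
    (hsup : ∀ x y : D, φ (x ⊔ y) = idealJoin (φ x) (φ y))
    (hemb : ∀ x y : D, x ≤ y ↔ φ x ⊆ φ y) :
    ∃ f : D → M,
      (∀ x y : D, f (x ⊔ y) = f x ⊔ f y) ∧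
      (∀ x y : D, f (x ⊓ y) = f x ⊓ f y) ∧
      (∀ x : D, f x ∈ φ x) ∧
      (∀ x y : D, f x ∈ φ y → x ≤ y) := by
  classical
  rcases isEmpty_or_nonempty D with hD | hD
  · exact ⟨fun x => (hD.false x).elim, fun x => (hD.false x).elim, fun x => (hD.false x).elim,
      fun x => (hD.false x).elim, fun x => (hD.false x).elim⟩
  -- `D` is a finite nonempty lattice, so it has a bottom element.
  letI : OrderBot D :=
    { bot := Finset.univ.inf' Finset.univ_nonempty id
      bot_le := fun a => Finset.inf'_le id (Finset.mem_univ a) }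
  have hdown : ∀ (z : D) (a b : M), a ≤ b → b ∈ φ z → a ∈ φ z := fun z => (hId z).2.1
  have hjoinφ : ∀ (z : D) (a b : M), a ∈ φ z → b ∈ φ z → a ⊔ b ∈ φ z := fun z => (hId z).2.2
  -- every element is determined by the sup-irreducibles below it
  have hdecomp : ∀ x z : D, (∀ q : D, SupIrred q → q ≤ x → q ≤ z) → x ≤ z := by
    intro x z h
    obtain ⟨s, hs, hirr⟩ := exists_supIrred_decomposition x
    rw [← hs]
    exact Finset.sup_le fun b hb =>
      h b (hirr hb) (le_trans (Finset.le_sup (f := id) hb) (le_of_eq hs))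
  -- main induction on down-closed finite sets of sup-irreducibles
  have key : ∀ (n : ℕ) (S : Finset D),
      S.card ≤ n →
      (∀ p ∈ S, SupIrred p) →
      (∀ p ∈ S, ∀ q : D, SupIrred q → q ≤ p → q ∈ S) →
      ∃ f : D → M,
        (∀ x y : D, (∀ q, SupIrred q → q ≤ x → q ∈ S) → (∀ q, SupIrred q → q ≤ y → q ∈ S) →
          f (x ⊔ y) = f x ⊔ f y) ∧
        (∀ x y : D, (∀ q, SupIrred q → q ≤ x → q ∈ S) → (∀ q, SupIrred q → q ≤ y → q ∈ S) →
          f (x ⊓ y) = f x ⊓ f y) ∧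
        (∀ x : D, (∀ q, SupIrred q → q ≤ x → q ∈ S) → f x ∈ φ x) ∧
        (∀ x y : D, (∀ q, SupIrred q → q ≤ x → q ∈ S) → f x ∈ φ y → x ≤ y) := by
    intro n
    induction n with
    | zero =>
      intro S hcard _ _
      have hS : S = ∅ := Finset.card_eq_zero.mp (Nat.le_zero.mp hcard)
      subst hS
      obtain ⟨e, he⟩ := (hId ⊥).1
      have hbot : ∀ x : D, (∀ q : D, SupIrred q → q ≤ x → q ∈ (∅ : Finset D)) → x = ⊥ := by
        intro x hx
        refine le_bot_iff.mp (hdecomp x ⊥ fun q hq hqx => ?_)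
        exact absurd (hx q hq hqx) (Finset.notMem_empty q)
      refine ⟨fun _ => e, fun x y _ _ => by simp, fun x y _ _ => by simp, ?_, ?_⟩
      · intro x hx
        have hx0 := hbot x hx
        simpa [hx0] using he
      · intro x y hx _
        rw [hbot x hx]
        exact bot_le
    | succ n ih =>
      intro S hcard hirr hdc
      rcases S.eq_empty_or_nonempty with rfl | hne
      · exact ih ∅ (by simp) (by simp) (by simp)
      obtain ⟨p, hpS, hpmax'⟩ := Finset.exists_maximal hne
      have hpmax : ∀ s ∈ S, ¬ p < s := fun s hs hlt =>
        lt_irrefl p (lt_of_lt_of_le hlt (hpmax' hs hlt.le))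
      have hpJI : SupIrred p := hirr p hpS
      have hpP : SupPrime p := hpJI.supPrime
      set S₀ := S.erase p with hS₀
      have hcard₀ : S₀.card ≤ n := by
        rw [hS₀, Finset.card_erase_of_mem hpS]
        have h2 : 1 ≤ S.card := Finset.card_pos.mpr hne
        omega
      have hirr₀ : ∀ q ∈ S₀, SupIrred q := fun q hq => hirr q (Finset.mem_of_mem_erase hq)
      have hdc₀ : ∀ s ∈ S₀, ∀ q : D, SupIrred q → q ≤ s → q ∈ S₀ := by
        intro s hs q hq hqs
        have hsS := Finset.mem_of_mem_erase hs
        refine Finset.mem_erase.mpr ⟨?_, hdc s hsS q hq hqs⟩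
        rintro rfl
        exact hpmax s hsS (lt_of_le_of_ne hqs (Finset.ne_of_mem_erase hs).symm)
      obtain ⟨f, hfj, hfm, hfφ, hfle⟩ := ih S₀ hcard₀ hirr₀ hdc₀
      set T := S₀.sup id with hT
      have hpT : ¬ p ≤ T := by
        intro h
        obtain ⟨s, hs, hps⟩ := hpP.le_finset_sup.mp h
        exact hpmax s (Finset.mem_of_mem_erase hs)
          (lt_of_le_of_ne hps (Finset.ne_of_mem_erase hs).symm)
      -- everything below T is controlled by S₀
      have hP₀ : ∀ x : D, x ≤ T → ∀ q : D, SupIrred q → q ≤ x → q ∈ S₀ := by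
        intro x hx q hq hqx
        obtain ⟨s, hs, hqs⟩ := hq.supPrime.le_finset_sup.mp (le_trans hqx hx)
        exact hdc₀ s hs q hq hqs
      have hsubT : ∀ x : D, (∀ q : D, SupIrred q → q ≤ x → q ∈ S₀) → x ≤ T := fun x hx =>
        hdecomp x T fun q hq hqx => Finset.le_sup (f := id) (hx q hq hqx)
      have hmono : ∀ a b : D, a ≤ T → b ≤ T → a ≤ b → f a ≤ f b := by
        intro a b ha hb hab
        have h1 := hfm a b (hP₀ a ha) (hP₀ b hb)
        rw [inf_eq_left.mpr hab] at h1
        rw [h1]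
        exact inf_le_right
      have hSsub : ∀ x : D, (∀ q : D, SupIrred q → q ≤ x → q ∈ S) → x ≤ T ⊔ p := by
        intro x hx
        refine hdecomp x (T ⊔ p) fun q hq hqx => ?_
        have hqS := hx q hq hqx
        by_cases hqp : q = p
        · subst hqp; exact le_sup_right
        · exact le_trans (Finset.le_sup (f := id) (Finset.mem_erase.mpr ⟨hqp, hqS⟩)) le_sup_left
      have hdecY : ∀ x : D, (∀ q : D, SupIrred q → q ≤ x → q ∈ S) → p ≤ x → (x ⊓ T) ⊔ p = x := by
        intro x hx hpx
        refine le_antisymm (sup_le inf_le_left hpx) ?_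
        calc x = x ⊓ (T ⊔ p) := (inf_eq_left.mpr (hSsub x hx)).symm
          _ = (x ⊓ T) ⊔ (x ⊓ p) := by rw [inf_sup_left]
          _ ≤ (x ⊓ T) ⊔ p := sup_le_sup_left inf_le_right _
      have hPnop : ∀ x : D, (∀ q : D, SupIrred q → q ≤ x → q ∈ S) → ¬ p ≤ x →
          ∀ q : D, SupIrred q → q ≤ x → q ∈ S₀ := by
        intro x hx hpx q hq hqx
        refine Finset.mem_erase.mpr ⟨?_, hx q hq hqx⟩
        rintro rfl
        exact hpx hqx
      -- choice of the element m
      have hPpT : ∀ q : D, SupIrred q → q ≤ p ⊓ T → q ∈ S₀ := hP₀ _ inf_le_right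
      have hct : f (p ⊓ T) ≤ f T := hmono _ _ inf_le_right le_rfl inf_le_right
      set w := (Finset.univ.filter fun z : D => ¬ p ≤ z).sup id with hw
      have hpw : ¬ p ≤ w := by
        intro h
        obtain ⟨s, hs, hps⟩ := hpP.le_finset_sup.mp h
        exact (Finset.mem_filter.mp hs).2 hps
      have hlew : ∀ z : D, ¬ p ≤ z → z ≤ w := fun z hz =>
        Finset.le_sup (f := id) (Finset.mem_filter.mpr ⟨Finset.mem_univ z, hz⟩)
      have hTw : T ≤ w := hlew T hpT
      obtain ⟨u₀, hu₀p, hu₀w⟩ := Set.not_subset.mp (fun hsub => hpw ((hemb p w).mpr hsub))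
      have hcφp : f (p ⊓ T) ∈ φ p := (hemb (p ⊓ T) p).mp inf_le_left (hfφ _ hPpT)
      set u := u₀ ⊔ f (p ⊓ T) with hu
      have hup : u ∈ φ p := hjoinφ p u₀ _ hu₀p hcφp
      have huw : u ∉ φ w := fun h => hu₀w (hdown w u₀ u le_sup_left h)
      have hcd : f (p ⊓ T) ≤ u ⊓ f T := le_inf le_sup_right hct
      obtain ⟨y₀, hy₁, hy₂⟩ := hRC (f (p ⊓ T)) (u ⊓ f T) u hcd inf_le_left
      set m := f (p ⊓ T) ⊔ y₀ with hmdef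
      have hcm : f (p ⊓ T) ≤ m := le_sup_left
      have hmu : m ≤ u := sup_le le_sup_right (le_trans le_sup_right (le_of_eq hy₂))
      have hdm : (u ⊓ f T) ⊓ m = f (p ⊓ T) := by
        rw [hmdef, inf_comm (u ⊓ f T) _, sup_inf_assoc_of_le y₀ hcd,
          inf_comm y₀ (u ⊓ f T), hy₁, sup_idem]
      have hmt : m ⊓ f T = f (p ⊓ T) := by
        have h1 : m ⊓ (u ⊓ f T) = m ⊓ f T := by
          rw [← inf_assoc, inf_eq_left.mpr hmu]
        rw [← h1, inf_comm m (u ⊓ f T), hdm]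
      have hmφp : m ∈ φ p := hdown p m u hmu hup
      have hmw : m ∉ φ w := by
        intro h
        have hdw : u ⊓ f T ∈ φ w :=
          hdown w (u ⊓ f T) (f T) inf_le_right ((hemb T w).mp hTw (hfφ T (hP₀ T le_rfl)))
        have h2 : (u ⊓ f T) ⊔ m ∈ φ w := hjoinφ w _ _ hdw h
        have he : (u ⊓ f T) ⊔ m = u := by
          rw [hmdef, sup_comm (f (p ⊓ T)) y₀, ← sup_assoc, hy₂]
          exact sup_eq_left.mpr le_sup_right
        rw [he] at h2
        exact huw h2
      -- two key modular computations
      have hAt : ∀ x : D, f (x ⊓ T) ≤ f T := fun x => hmono _ _ inf_le_right le_rfl inf_le_right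
      have hmodt : ∀ x : D, (f (x ⊓ T) ⊔ m) ⊓ f T = f (x ⊓ T) ⊔ f (p ⊓ T) := by
        intro x
        rw [sup_inf_assoc_of_le m (hAt x), hmt]
      have key1 : ∀ x z : D, z ≤ T →
          (f (x ⊓ T) ⊔ m) ⊓ f z = f (((x ⊓ T) ⊔ (p ⊓ T)) ⊓ z) := by
        intro x z hzT
        have hfz : f z ≤ f T := hmono z T hzT le_rfl hzT
        calc (f (x ⊓ T) ⊔ m) ⊓ f z
            = ((f (x ⊓ T) ⊔ m) ⊓ f T) ⊓ f z := by rw [inf_assoc, inf_eq_right.mpr hfz]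
          _ = (f (x ⊓ T) ⊔ f (p ⊓ T)) ⊓ f z := by rw [hmodt x]
          _ = f ((x ⊓ T) ⊔ (p ⊓ T)) ⊓ f z := by
              rw [hfj _ _ (hP₀ _ inf_le_right) (hP₀ _ inf_le_right)]
          _ = f (((x ⊓ T) ⊔ (p ⊓ T)) ⊓ z) :=
              (hfm _ _ (hP₀ _ (sup_le inf_le_right inf_le_right)) (hP₀ _ hzT)).symm
      have key2 : ∀ x z : D,
          (f (x ⊓ T) ⊔ m) ⊓ (f (z ⊓ T) ⊔ m) = (f (x ⊓ T) ⊓ f (z ⊓ T)) ⊔ m := by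
        intro x z
        have h1 : (f (x ⊓ T) ⊔ m) ⊓ (f (z ⊓ T) ⊔ m)
            = ((f (x ⊓ T) ⊔ m) ⊓ f (z ⊓ T)) ⊔ m := by
          rw [inf_comm (f (x ⊓ T) ⊔ m) (f (z ⊓ T) ⊔ m), sup_comm (f (z ⊓ T)) m,
            sup_inf_assoc_of_le (f (z ⊓ T)) (le_sup_right : m ≤ f (x ⊓ T) ⊔ m),
            sup_comm m (f (z ⊓ T) ⊓ (f (x ⊓ T) ⊔ m)), inf_comm (f (z ⊓ T)) (f (x ⊓ T) ⊔ m)]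
        have h2 : (f (x ⊓ T) ⊔ m) ⊓ f (z ⊓ T) = f (((x ⊓ T) ⊔ (p ⊓ T)) ⊓ (z ⊓ T)) :=
          key1 x (z ⊓ T) inf_le_right
        have hD1 : ((x ⊓ T) ⊔ (p ⊓ T)) ⊓ (z ⊓ T)
            = ((x ⊓ T) ⊓ (z ⊓ T)) ⊔ ((p ⊓ T) ⊓ (z ⊓ T)) := by rw [inf_sup_right]
        have hE : f ((p ⊓ T) ⊓ (z ⊓ T)) ≤ m :=
          le_trans (hmono _ _ (le_trans inf_le_left inf_le_right) inf_le_right inf_le_left) hcm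
        rw [h1, h2, hD1,
          hfj _ _ (hP₀ _ (le_trans inf_le_left inf_le_right)) (hP₀ _ (le_trans inf_le_left inf_le_right)),
          hfm _ _ (hP₀ _ inf_le_right) (hP₀ _ inf_le_right),
          sup_assoc, sup_eq_right.mpr hE]
      -- the extended map
      refine ⟨fun z => if p ≤ z then f (z ⊓ T) ⊔ m else f z, ?_, ?_, ?_, ?_⟩
      · -- joins
        intro x y hx hy
        by_cases hpx : p ≤ x
        · by_cases hpy : p ≤ y
          · have hpxy : p ≤ x ⊔ y := le_trans hpx le_sup_left
            simp only [if_pos hpxy, if_pos hpx, if_pos hpy]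
            rw [inf_sup_right, hfj _ _ (hP₀ _ inf_le_right) (hP₀ _ inf_le_right)]
            have hs : (f (x ⊓ T) ⊔ m) ⊔ (f (y ⊓ T) ⊔ m)
                = (f (x ⊓ T) ⊔ f (y ⊓ T)) ⊔ (m ⊔ m) := sup_sup_sup_comm _ _ _ _
            rw [hs, sup_idem m]
          · have hpxy : p ≤ x ⊔ y := le_trans hpx le_sup_left
            have hyT : y ≤ T := hsubT y (hPnop y hy hpy)
            simp only [if_pos hpxy, if_pos hpx, if_neg hpy]
            have h1 : (x ⊔ y) ⊓ T = (x ⊓ T) ⊔ y := by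
              rw [inf_sup_right, inf_eq_left.mpr hyT]
            rw [h1, hfj _ _ (hP₀ _ inf_le_right) (hP₀ _ hyT), sup_right_comm]
        · by_cases hpy : p ≤ y
          · have hpxy : p ≤ x ⊔ y := le_trans hpy le_sup_right
            have hxT : x ≤ T := hsubT x (hPnop x hx hpx)
            simp only [if_pos hpxy, if_neg hpx, if_pos hpy]
            have h1 : (x ⊔ y) ⊓ T = x ⊔ (y ⊓ T) := by
              rw [inf_sup_right, inf_eq_left.mpr hxT]
            rw [h1, hfj _ _ (hP₀ _ hxT) (hP₀ _ inf_le_right), sup_assoc]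
          · have hpxy : ¬ p ≤ x ⊔ y := fun h => (hpP.2 h).elim hpx hpy
            simp only [if_neg hpxy, if_neg hpx, if_neg hpy]
            exact hfj x y (hPnop x hx hpx) (hPnop y hy hpy)
      · -- meets
        intro x y hx hy
        by_cases hpx : p ≤ x
        · by_cases hpy : p ≤ y
          · have hpxy : p ≤ x ⊓ y := le_inf hpx hpy
            simp only [if_pos hpxy, if_pos hpx, if_pos hpy]
            rw [key2, ← hfm _ _ (hP₀ _ inf_le_right) (hP₀ _ inf_le_right),
              ← inf_inf_distrib_right]
          · have hpxy : ¬ p ≤ x ⊓ y := fun h => hpy (le_trans h inf_le_right)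
            have hyT : y ≤ T := hsubT y (hPnop y hy hpy)
            simp only [if_neg hpxy, if_pos hpx, if_neg hpy]
            rw [key1 x y hyT]
            have h1 : ((x ⊓ T) ⊔ (p ⊓ T)) ⊓ y = x ⊓ y := by
              rw [← inf_sup_right, sup_eq_left.mpr hpx, inf_assoc, inf_eq_right.mpr hyT]
            rw [h1]
        · by_cases hpy : p ≤ y
          · have hpxy : ¬ p ≤ x ⊓ y := fun h => hpx (le_trans h inf_le_left)
            have hxT : x ≤ T := hsubT x (hPnop x hx hpx)
            simp only [if_neg hpxy, if_neg hpx, if_pos hpy]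
            rw [inf_comm (f x) (f (y ⊓ T) ⊔ m), key1 y x hxT]
            have h1 : ((y ⊓ T) ⊔ (p ⊓ T)) ⊓ x = x ⊓ y := by
              rw [← inf_sup_right, sup_eq_left.mpr hpy, inf_assoc, inf_eq_right.mpr hxT,
                inf_comm y x]
            rw [h1]
          · have hpxy : ¬ p ≤ x ⊓ y := fun h => hpx (le_trans h inf_le_left)
            simp only [if_neg hpxy, if_neg hpx, if_neg hpy]
            exact hfm x y (hPnop x hx hpx) (hPnop y hy hpy)
      · -- membership
        intro x hx
        by_cases hpx : p ≤ x
        · simp only [if_pos hpx]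
          have hdx := hdecY x hx hpx
          have hφx : φ x = idealJoin (φ (x ⊓ T)) (φ p) := by
            rw [← hsup (x ⊓ T) p, hdx]
          rw [hφx]
          exact ⟨f (x ⊓ T), hfφ _ (hP₀ _ inf_le_right), m, hmφp, le_rfl⟩
        · simp only [if_neg hpx]
          exact hfφ x (hPnop x hx hpx)
      · -- sharpness
        intro x y hx hmem
        by_cases hpx : p ≤ x
        · simp only [if_pos hpx] at hmem
          have h1 : f (x ⊓ T) ∈ φ y := hdown y _ _ le_sup_left hmem
          have h2 : m ∈ φ y := hdown y _ _ le_sup_right hmem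
          have hxT : x ⊓ T ≤ y := hfle _ y (hP₀ _ inf_le_right) h1
          have hpy : p ≤ y := by
            by_contra hpy
            exact hmw ((hemb y w).mp (hlew y hpy) h2)
          calc x = (x ⊓ T) ⊔ p := (hdecY x hx hpx).symm
            _ ≤ y := sup_le hxT hpy
        · simp only [if_neg hpx] at hmem
          exact hfle x y (hPnop x hx hpx) hmem
  -- apply the induction to the set of all sup-irreducibles
  obtain ⟨f, h1, h2, h3, h4⟩ := key (Finset.univ.filter fun q : D => SupIrred q).card
    (Finset.univ.filter fun q : D => SupIrred q) le_rfl
    (fun p hp => (Finset.mem_filter.mp hp).2)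
    (fun p _ q hq _ => Finset.mem_filter.mpr ⟨Finset.mem_univ q, hq⟩)
  have hall : ∀ x : D, ∀ q : D, SupIrred q → q ≤ x →
      q ∈ Finset.univ.filter fun q : D => SupIrred q :=
    fun x q hq _ => Finset.mem_filter.mpr ⟨Finset.mem_univ q, hq⟩
  exact ⟨f, fun x y => h1 x y (hall x) (hall y), fun x y => h2 x y (hall x) (hall y),
    fun x => h3 x (hall x), fun x y hm => h4 x y (hall x) hm⟩
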